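/- Let 𝔠 be a finitely aligned left cancellative small category generated by a subset 𝔖. Every character χ ∈ Ω that is not of the form χ_x for x ∈ 𝔠 equals χ_w for some infinite path w = s₁s₂⋯ in 𝔖, where χ_w(e) = 1 iff s₁⋯sₙ ∈ e for some n. -/

import Mathlib

open CategoryTheory

variable {C : Type*} [Category C]

/-- The set of morphisms of the small category `C`, with domain and codomain recorded:
an element `⟨a, b, f⟩` is a morphism `f` with `𝔡 = a` and `𝔱 = b`. -/
abbrev Mor (C : Type*) [Category C] := Σ (a b : C), a ⟶ b

/-- The principal right ideal `x𝔠 = {xy : y ∈ 𝔡(x)𝔠}`. -/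
def princ (x : Mor C) : Set (Mor C) :=
  {z | ∃ (c : C) (g : c ⟶ x.1), z = ⟨c, x.2.1, g ≫ x.2.2⟩}

/-- The right ideal `𝔳𝔠 = {x : 𝔱(x) = 𝔳}`. -/
def objIdeal (v : C) : Set (Mor C) := {z | z.2.1 = v}

/-- Image of a subset `e ⊆ 𝔠` under left multiplication by `c`. -/
def mulSet (c : Mor C) (e : Set (Mor C)) : Set (Mor C) :=
  {z | ∃ (w : C) (g : w ⟶ c.1), (⟨w, c.1, g⟩ : Mor C) ∈ e ∧ z = ⟨w, c.2.1, g ≫ c.2.2⟩}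

/-- Preimage of a subset `e ⊆ 𝔠` under left multiplication by `c`. -/
def divSet (c : Mor C) (e : Set (Mor C)) : Set (Mor C) :=
  {z | ∃ (w : C) (g : w ⟶ c.1), z = ⟨w, c.1, g⟩ ∧ (⟨w, c.2.1, g ≫ c.2.2⟩ : Mor C) ∈ e}

/-- The constructible right ideals of `𝔠`: the domains/images of elements of the left
inverse hull `I_l`, i.e. the smallest family of subsets containing all `𝔳𝔠` and closed
under images and preimages of the left multiplication maps.  This family is the
semilattice `𝒥` of idempotents of `I_l` (product = intersection, order = inclusion). -/
inductive IsConstructible : Set (Mor C) → Prop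
  | base (v : C) : IsConstructible (objIdeal v)
  | mul (c : Mor C) {e : Set (Mor C)} : IsConstructible e → IsConstructible (mulSet c e)
  | div (c : Mor C) {e : Set (Mor C)} : IsConstructible e → IsConstructible (divSet c e)

/-- A character on the semilattice `𝒥` of constructible right ideals: a nonzero
multiplicative `{0,1}`-valued map sending `∅ = 0` to `0`. -/
def IsCharacter (χ : Set (Mor C) → Prop) : Prop :=
  (∃ e : Set (Mor C), IsConstructible e ∧ χ e) ∧ ¬ χ (∅ : Set (Mor C)) ∧
    ∀ e f : Set (Mor C), IsConstructible e → IsConstructible f →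
      (χ (e ∩ f) ↔ χ e ∧ χ f)

/-- A maximal character: the filter `χ⁻¹(1)` is maximal among filters of characters. -/
def IsMaxCharacter (χ : Set (Mor C) → Prop) : Prop :=
  IsCharacter χ ∧ ∀ ψ : Set (Mor C) → Prop, IsCharacter ψ →
    (∀ e : Set (Mor C), IsConstructible e → χ e → ψ e) →
    ∀ e : Set (Mor C), IsConstructible e → ψ e → χ e

/-- `m` is an invertible element of `𝔠` (i.e. `m ∈ 𝔠*`). -/
def MInv (m : Mor C) : Prop := IsIso m.2.2

/-- The product `g · f` (g after f), defined when `𝔱(f) = 𝔡(g)`. -/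
def mcomp (g f : Mor C) (h : f.2.1 = g.1) : Mor C :=
  ⟨f.1, g.2.1, f.2.2 ≫ eqToHom h ≫ g.2.2⟩

/-- `ProdEq w m`: the finite word `w = s₁ s₂ ⋯` is a path (consecutive letters are
composable) and its product equals `m`.  The empty word has the identities as products. -/
inductive ProdEq : List (Mor C) → Mor C → Prop
  | nil (v : C) : ProdEq [] ⟨v, v, 𝟙 v⟩
  | single (s : Mor C) : ProdEq [s] s
  | cons (s : Mor C) {l : List (Mor C)} {b : Mor C} (h : ProdEq l b) (hc : b.2.1 = s.1) :
      ProdEq (s :: l) (mcomp s b hc)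

/-- `a ⪯ b`: `a` is a left divisor of `b`, i.e. `b ∈ a𝔠`. -/
def ldvd (a b : Mor C) : Prop := b ∈ princ a

/-- The pair `(a, b)` is `𝔖`-normal: for every `r ∈ 𝔖`, `r ⪯ ab` implies `r ⪯ a`. -/
def NormalPair (S : Set (Mor C)) (a b : Mor C) : Prop :=
  ∀ m : Mor C, ProdEq [a, b] m → ∀ r ∈ S, ldvd r m → ldvd r a

/-- A word is `𝔖`-normal: consecutive letters are composable and every consecutive
pair is `𝔖`-normal. -/
def IsNormalWord (S : Set (Mor C)) (w : List (Mor C)) : Prop :=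
  w.Chain' (fun a b => a.1 = b.2.1 ∧ NormalPair S a b)

/-- `𝔖♯ := 𝔖𝔠* ∪ 𝔠*`. -/
def SSharp (S : Set (Mor C)) : Set (Mor C) :=
  {m | MInv m ∨ ∃ s ∈ S, ∃ u : Mor C, MInv u ∧ ∃ h : u.2.1 = s.1, m = mcomp s u h}

/-- `𝔖` is closed under right comultiples. -/
def ClosedRightComult (S : Set (Mor C)) : Prop :=
  ∀ r ∈ S, ∀ s ∈ S, ∀ a : Mor C, ldvd r a → ldvd s a →
    ∃ t ∈ S, ldvd r t ∧ ldvd s t ∧ ldvd t a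

/-- `𝔖 ∪ 𝔠*` generates `𝔠`. -/
def GeneratesWithUnits (S : Set (Mor C)) : Prop :=
  ∀ a : Mor C, ∃ w : List (Mor C), (∀ x ∈ w, x ∈ S ∨ MInv x) ∧ ProdEq w a

/-- `𝔖♯` is closed under right divisors. -/
def ClosedRightDiv (S : Set (Mor C)) : Prop :=
  ∀ (x y : Mor C) (h : y.2.1 = x.1), mcomp x y h ∈ SSharp S → y ∈ SSharp S

/-- `𝔖` is a Garside family in `𝔠`: it is closed under right comultiples, `𝔖 ∪ 𝔠*`
generates `𝔠`, `𝔖♯` is closed under right divisors, and every element of `𝔠` admits an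
`𝔖`-normal decomposition by letters of `𝔖♯`. -/
def IsGarside (S : Set (Mor C)) : Prop :=
  ClosedRightComult S ∧ GeneratesWithUnits S ∧ ClosedRightDiv S ∧
    ∀ a : Mor C, ∃ w : List (Mor C),
      (∀ x ∈ w, x ∈ SSharp S) ∧ IsNormalWord S w ∧ ProdEq w a

/-- `𝔖` is `=*`-transverse: distinct elements of `𝔖` generate distinct principal
right ideals. -/
def Transverse (S : Set (Mor C)) : Prop :=
  ∀ s₁ ∈ S, ∀ s₂ ∈ S, princ s₁ = princ s₂ → s₁ = s₂

/-- The character `χ_w` associated to an infinite word `w` in `𝔖`: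
`χ_w(e) = 1` iff some finite prefix product `w₁ ⋯ wₙ` lies in `e`. -/
def chiW (w : ℕ → Mor C) : Set (Mor C) → Prop :=
  fun e => ∃ (n : ℕ) (m : Mor C), ProdEq ((List.range (n + 1)).map w) m ∧ m ∈ e

/-- `χ ∈ Ω`: a character such that whenever `e = ⋃ᵢ fᵢ` (finitely many `fᵢ ∈ 𝒥`) and
`χ(e) = 1`, then `χ(fᵢ) = 1` for some `i`. -/
def InOmega (χ : Set (Mor C) → Prop) : Prop :=
  IsCharacter χ ∧ ∀ (k : ℕ) (e : Set (Mor C)) (f : Fin k → Set (Mor C)),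
    IsConstructible e → (∀ i, IsConstructible (f i)) → e = ⋃ i, f i → χ e → ∃ i, χ (f i)

section Aux

lemma self_mem_princ (x : Mor C) : x ∈ princ x := by
  obtain ⟨a, b, f⟩ := x
  exact ⟨a, 𝟙 a, by simp⟩

lemma princ_trans {x y z : Mor C} (hzy : z ∈ princ y) (hyx : y ∈ princ x) : z ∈ princ x := by
  obtain ⟨c, g, rfl⟩ := hzy
  obtain ⟨d, h, rfl⟩ := hyx
  exact ⟨c, g ≫ h, by simp⟩

lemma princ_mono {x y : Mor C} (h : x ∈ princ y) : princ x ⊆ princ y :=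
  fun _ hz => princ_trans hz h

lemma princ_constructible (x : Mor C) : IsConstructible (princ x) := by
  have : princ x = mulSet x (objIdeal x.1) := by
    ext z
    constructor
    · rintro ⟨c, g, rfl⟩; exact ⟨c, g, rfl, rfl⟩
    · rintro ⟨w, g, _, rfl⟩; exact ⟨w, g, rfl⟩
  rw [this]; exact .mul x (.base x.1)

lemma mor_mk_inj {a a' b b' : C} {f : a ⟶ b} {f' : a' ⟶ b'}
    (h : (⟨a, b, f⟩ : Mor C) = ⟨a', b', f'⟩) :
    ∃ (ha : a' = a) (hb : b' = b), f = eqToHom ha.symm ≫ f' ≫ eqToHom hb := by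
  cases h; exact ⟨rfl, rfl, by simp⟩

lemma mcomp_mem_princ (a b : Mor C) (h : b.2.1 = a.1) : mcomp a b h ∈ princ a :=
  ⟨b.1, b.2.2 ≫ eqToHom h, by simp [mcomp]⟩

lemma mcomp_assoc (a b c : Mor C) (h1 : b.2.1 = a.1) (h2 : c.2.1 = b.1) :
    mcomp (mcomp a b h1) c h2 = mcomp a (mcomp b c h2) h1 := by
  simp [mcomp]

lemma mcomp_id (b : Mor C) (v : C) (h : b.2.1 = v) :
    mcomp ⟨v, v, 𝟙 v⟩ b h = b := by
  obtain ⟨p, q, f⟩ := b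
  cases h
  simp [mcomp]

lemma mcomp_id' (s : Mor C) (h : (⟨s.1, s.1, 𝟙 s.1⟩ : Mor C).2.1 = s.1) :
    mcomp s ⟨s.1, s.1, 𝟙 s.1⟩ h = s := by
  obtain ⟨p, q, f⟩ := s
  simp [mcomp]

end Aux
section Aux2

lemma prodEq_append {l l' : List (Mor C)} {a b : Mor C} (ha : ProdEq l a) (hb : ProdEq l' b) :
    ∀ (h : b.2.1 = a.1), ProdEq (l ++ l') (mcomp a b h) := by
  induction ha with
  | nil v =>
      intro h
      rw [List.nil_append, mcomp_id b v h]
      exact hb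
  | single s =>
      intro h
      exact ProdEq.cons s hb h
  | cons s hl hc ih =>
      intro h
      have h' : b.2.1 = _ := h
      have := ProdEq.cons s (ih h') hc
      rw [← mcomp_assoc s _ b hc h'] at this; exact this

lemma prodEq_nil_inv {m : Mor C} (h : ProdEq ([] : List (Mor C)) m) : ∃ v : C, m = ⟨v, v, 𝟙 v⟩ := by
  cases h; exact ⟨_, rfl⟩

lemma prodEq_cons_inv {s : Mor C} {l : List (Mor C)} {m : Mor C} (h : ProdEq (s :: l) m) :
    ∃ (b : Mor C) (hc : b.2.1 = s.1), ProdEq l b ∧ m = mcomp s b hc := by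
  cases h with
  | single => exact ⟨⟨s.1, s.1, 𝟙 s.1⟩, rfl, ProdEq.nil s.1, (mcomp_id' s rfl).symm⟩
  | cons _ hb hc => exact ⟨_, hc, hb, rfl⟩

lemma prodEq_unique {l : List (Mor C)} (hl : l ≠ []) {a b : Mor C}
    (ha : ProdEq l a) (hb : ProdEq l b) : a = b := by
  induction l generalizing a b with
  | nil => exact absurd rfl hl
  | cons s t ih =>
    obtain ⟨p, hp, hlp, rfl⟩ := prodEq_cons_inv ha
    obtain ⟨q, hq, hlq, rfl⟩ := prodEq_cons_inv hb
    by_cases ht : t = []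
    · subst ht
      obtain ⟨v, rfl⟩ := prodEq_nil_inv hlp
      obtain ⟨u, rfl⟩ := prodEq_nil_inv hlq
      have hv : v = s.1 := hp
      have hu : u = s.1 := hq
      subst hv; subst hu; rfl
    · have := ih ht hlp hlq
      subst this; rfl

lemma prodEq_append_split {l l' : List (Mor C)} (hl : l ≠ []) {m : Mor C}
    (h : ProdEq (l ++ l') m) :
    ∃ (a b : Mor C) (hc : b.2.1 = a.1), ProdEq l a ∧ ProdEq l' b ∧ m = mcomp a b hc := by
  induction l generalizing m with
  | nil => exact absurd rfl hl
  | cons s t ih =>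
    rw [List.cons_append] at h
    obtain ⟨c, hc, hlc, rfl⟩ := prodEq_cons_inv h
    by_cases ht : t = []
    · subst ht
      exact ⟨s, c, hc, ProdEq.single s, hlc, rfl⟩
    · obtain ⟨a, b, hab, hta, hlb, rfl⟩ := ih ht hlc
      refine ⟨mcomp s a hc, b, hab, ProdEq.cons s hta hc, hlb, ?_⟩
      exact (mcomp_assoc s a b hc hab).symm

lemma prodEq_head {l : List (Mor C)} {m : Mor C} (h : ProdEq l m) :
    ∀ x ∈ l.head?, x.2.1 = m.2.1 := by
  cases h with
  | nil v => simp
  | single s => simp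
  | cons s hl hc => intro x hx; simp at hx; subst hx; rfl

lemma prodEq_chain' {l : List (Mor C)} {m : Mor C} (h : ProdEq l m) :
    l.Chain' (fun a b => a.1 = b.2.1) := by
  induction h with
  | nil v => simp [List.Chain']
  | single s => simp [List.Chain']
  | cons s hl hc ih =>
    refine List.IsChain.cons ih ?_
    intro y hy
    rw [prodEq_head hl y hy, hc]

end Aux2
section Aux3

def UL (L : List (Mor C)) : Set (Mor C) := {z | ∃ x ∈ L, z ∈ princ x}

lemma UL_nil : UL ([] : List (Mor C)) = ∅ := by
  ext z; simp [UL]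

lemma UL_cons (a : Mor C) (L : List (Mor C)) : UL (a :: L) = princ a ∪ UL L := by
  ext z
  constructor
  · rintro ⟨x, hx, hz⟩
    rcases List.mem_cons.mp hx with rfl | hx
    · exact Or.inl hz
    · exact Or.inr ⟨x, hx, hz⟩
  · rintro (hz | ⟨x, hx, hz⟩)
    · exact ⟨a, List.mem_cons_self, hz⟩
    · exact ⟨x, List.mem_cons_of_mem a hx, hz⟩

lemma UL_append (L L' : List (Mor C)) : UL (L ++ L') = UL L ∪ UL L' := by
  ext z
  constructor
  · rintro ⟨x, hx, hz⟩
    rcases List.mem_append.mp hx with hx | hx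
    · exact Or.inl ⟨x, hx, hz⟩
    · exact Or.inr ⟨x, hx, hz⟩
  · rintro (⟨x, hx, hz⟩ | ⟨x, hx, hz⟩)
    · exact ⟨x, List.mem_append_left _ hx, hz⟩
    · exact ⟨x, List.mem_append_right _ hx, hz⟩

lemma UL_singleton (a : Mor C) : UL [a] = princ a := by
  rw [UL_cons, UL_nil, Set.union_empty]

lemma mulSet_union (c : Mor C) (e f : Set (Mor C)) :
    mulSet c (e ∪ f) = mulSet c e ∪ mulSet c f := by
  ext z; constructor
  · rintro ⟨w, g, (h | h), rfl⟩
    · exact Or.inl ⟨w, g, h, rfl⟩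
    · exact Or.inr ⟨w, g, h, rfl⟩
  · rintro (⟨w, g, h, rfl⟩ | ⟨w, g, h, rfl⟩)
    · exact ⟨w, g, Or.inl h, rfl⟩
    · exact ⟨w, g, Or.inr h, rfl⟩

lemma mulSet_empty (c : Mor C) : mulSet c (∅ : Set (Mor C)) = ∅ := by
  ext z; constructor
  · rintro ⟨w, g, h, rfl⟩; exact h
  · rintro ⟨⟩

lemma divSet_union (c : Mor C) (e f : Set (Mor C)) :
    divSet c (e ∪ f) = divSet c e ∪ divSet c f := by
  ext z; constructor
  · rintro ⟨w, g, rfl, (h | h)⟩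
    · exact Or.inl ⟨w, g, rfl, h⟩
    · exact Or.inr ⟨w, g, rfl, h⟩
  · rintro (⟨w, g, rfl, h⟩ | ⟨w, g, rfl, h⟩)
    · exact ⟨w, g, rfl, Or.inl h⟩
    · exact ⟨w, g, rfl, Or.inr h⟩

lemma divSet_empty (c : Mor C) : divSet c (∅ : Set (Mor C)) = ∅ := by
  ext z; constructor
  · rintro ⟨w, g, rfl, h⟩; exact h
  · rintro ⟨⟩

lemma objIdeal_eq (v : C) : objIdeal v = princ (⟨v, v, 𝟙 v⟩ : Mor C) := by
  ext z
  constructor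
  · intro hz
    obtain ⟨a, b, f⟩ := z
    have hb : b = v := hz
    subst hb
    exact ⟨a, f, by simp⟩
  · rintro ⟨c, g, rfl⟩; rfl

lemma mulSet_princ_pos (c x : Mor C) (h : x.2.1 = c.1) :
    mulSet c (princ x) = princ (mcomp c x h) := by
  obtain ⟨ca, cb, cf⟩ := c
  obtain ⟨xa, xb, xf⟩ := x
  simp only at h
  subst h
  ext z
  constructor
  · rintro ⟨w, g, hg, rfl⟩
    obtain ⟨d, k, hk⟩ := hg
    obtain ⟨hd, hb, hf⟩ := mor_mk_inj hk
    subst hd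
    simp only [eqToHom_refl, Category.id_comp, Category.comp_id] at hf
    subst hf
    exact ⟨d, k, by simp [mcomp]⟩
  · rintro ⟨d, k, rfl⟩
    exact ⟨d, k ≫ xf, ⟨d, k, by simp [mcomp]⟩, by simp [mcomp]; exact (Category.assoc _ _ _).symm⟩

lemma mulSet_princ_neg (c x : Mor C) (h : ¬ x.2.1 = c.1) :
    mulSet c (princ x) = ∅ := by
  ext z
  simp only [Set.mem_empty_iff_false, iff_false]
  rintro ⟨w, g, hg, rfl⟩
  obtain ⟨d, k, hk⟩ := hg
  obtain ⟨hd, hb, hf⟩ := mor_mk_inj hk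
  exact h hb

end Aux3
section Aux4

lemma mor_mk_eq {a b b' : C} (hb : b' = b) (f' : a ⟶ b') :
    (⟨a, b, f' ≫ eqToHom hb⟩ : Mor C) = ⟨a, b', f'⟩ := by
  subst hb; simp

lemma divSet_princ (hmono : ∀ {a b : C} (f : a ⟶ b), Mono f)
    (hFA : ∀ a b : Mor C, ∃ F : Finset (Mor C), princ a ∩ princ b = ⋃ c ∈ F, princ c)
    (c x : Mor C) : ∃ L : List (Mor C), divSet c (princ x) = UL L := by
  obtain ⟨F, hF⟩ := hFA x c
  have hd : ∀ t ∈ F, ∃ (d : Mor C) (h : d.2.1 = c.1), t = mcomp c d h := by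
    intro t ht
    have htm : t ∈ princ x ∩ princ c := by
      rw [hF]; exact Set.mem_biUnion ht (self_mem_princ t)
    obtain ⟨w, g, hw⟩ := htm.2
    refine ⟨⟨w, c.1, g⟩, rfl, ?_⟩
    rw [hw]
    obtain ⟨ca, cb, cf⟩ := c
    simp [mcomp]
  choose! d hd1 hd2 using hd
  refine ⟨F.toList.map d, ?_⟩
  ext z
  constructor
  · rintro ⟨w, g, rfl, hm⟩
    have hmc : (⟨w, c.2.1, g ≫ c.2.2⟩ : Mor C) ∈ princ x ∩ princ c := ⟨hm, ⟨w, g, rfl⟩⟩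
    rw [hF] at hmc
    obtain ⟨t, ht, hmt⟩ := Set.mem_iUnion₂.mp hmc
    rw [hd2 t ht] at hmt
    obtain ⟨u, k, hk⟩ := hmt
    obtain ⟨hu, hb, hf⟩ := mor_mk_inj hk
    subst hu
    simp only [eqToHom_refl, Category.id_comp, Category.comp_id, mcomp] at hf
    haveI := hmono c.2.2
    have hg : g = (k ≫ (d t).2.2) ≫ eqToHom (hd1 t ht) :=
      (cancel_mono c.2.2).mp (hf.trans (by simp; exact (Category.assoc _ _ _).symm))
    subst hg
    exact ⟨d t, List.mem_map_of_mem (f := d) (Finset.mem_toList.mpr ht),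
      ⟨u, k, mor_mk_eq (hd1 t ht) _⟩⟩
  · rintro ⟨y, hy, hz⟩
    obtain ⟨t, htl, rfl⟩ := List.mem_map.mp hy
    have ht : t ∈ F := Finset.mem_toList.mp htl
    obtain ⟨u, k, rfl⟩ := hz
    refine ⟨u, (k ≫ (d t).2.2) ≫ eqToHom (hd1 t ht), (mor_mk_eq (hd1 t ht) _).symm, ?_⟩
    have hmem : (⟨u, c.2.1, ((k ≫ (d t).2.2) ≫ eqToHom (hd1 t ht)) ≫ c.2.2⟩ : Mor C)
        ∈ princ t := by
      have hpt : princ t = princ (mcomp c (d t) (hd1 t ht)) := by rw [← hd2 t ht]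
      rw [hpt]
      exact ⟨u, k, by simp [mcomp]⟩
    have hsub : princ t ⊆ princ x ∩ princ c := by
      rw [hF]; exact Set.subset_biUnion_of_mem ht
    exact (hsub hmem).1

lemma divSet_UL (hmono : ∀ {a b : C} (f : a ⟶ b), Mono f)
    (hFA : ∀ a b : Mor C, ∃ F : Finset (Mor C), princ a ∩ princ b = ⋃ c ∈ F, princ c)
    (c : Mor C) (L : List (Mor C)) : ∃ L', divSet c (UL L) = UL L' := by
  induction L with
  | nil => exact ⟨[], by rw [UL_nil, divSet_empty]⟩
  | cons a L ih =>
    obtain ⟨L', hL'⟩ := ih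
    obtain ⟨L'', hL''⟩ := divSet_princ hmono hFA c a
    exact ⟨L'' ++ L', by rw [UL_cons, divSet_union, hL', hL'', UL_append]⟩

lemma mulSet_UL (c : Mor C) (L : List (Mor C)) : ∃ L', mulSet c (UL L) = UL L' := by
  induction L with
  | nil => exact ⟨[], by rw [UL_nil, mulSet_empty]⟩
  | cons a L ih =>
    obtain ⟨L', hL'⟩ := ih
    by_cases h : a.2.1 = c.1
    · exact ⟨mcomp c a h :: L', by
        rw [UL_cons, mulSet_union, hL', mulSet_princ_pos c a h, UL_cons]⟩
    · exact ⟨L', by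
        rw [UL_cons, mulSet_union, hL', mulSet_princ_neg c a h, Set.empty_union]⟩

lemma constructible_FU (hmono : ∀ {a b : C} (f : a ⟶ b), Mono f)
    (hFA : ∀ a b : Mor C, ∃ F : Finset (Mor C), princ a ∩ princ b = ⋃ c ∈ F, princ c)
    {e : Set (Mor C)} (he : IsConstructible e) : ∃ L : List (Mor C), e = UL L := by
  induction he with
  | base v => exact ⟨[⟨v, v, 𝟙 v⟩], by rw [objIdeal_eq, UL_singleton]⟩
  | mul c _ ih =>
    obtain ⟨L, rfl⟩ := ih
    exact mulSet_UL c L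
  | div c _ ih =>
    obtain ⟨L, rfl⟩ := ih
    exact divSet_UL hmono hFA c L

lemma constructible_ideal (hmono : ∀ {a b : C} (f : a ⟶ b), Mono f)
    (hFA : ∀ a b : Mor C, ∃ F : Finset (Mor C), princ a ∩ princ b = ⋃ c ∈ F, princ c)
    {e : Set (Mor C)} (he : IsConstructible e) {z : Mor C} (hz : z ∈ e) : princ z ⊆ e := by
  obtain ⟨L, rfl⟩ := constructible_FU hmono hFA he
  obtain ⟨y, hy, hzy⟩ := hz
  exact fun u hu => ⟨y, hy, princ_trans hu hzy⟩

lemma princ_inter_constructible (x : Mor C) {f : Set (Mor C)} (hf : IsConstructible f) :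
    IsConstructible (princ x ∩ f) := by
  have heq : princ x ∩ f = mulSet x (divSet x f) := by
    ext z
    constructor
    · rintro ⟨⟨c, g, rfl⟩, hzf⟩
      exact ⟨c, g, ⟨c, g, rfl, hzf⟩, rfl⟩
    · rintro ⟨w, g, ⟨w', g', heq, hf'⟩, rfl⟩
      obtain ⟨hw, hb, hg⟩ := mor_mk_inj heq
      subst hw
      simp only [eqToHom_refl, Category.id_comp, Category.comp_id] at hg
      subst hg
      exact ⟨⟨w', g, rfl⟩, hf'⟩
  rw [heq]
  exact .mul x (.div x hf)

end Aux4
lemma UL_eq_iUnion (L : List (Mor C)) : UL L = ⋃ i : Fin L.length, princ (L.get i) := by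
  ext z
  simp only [Set.mem_iUnion]
  constructor
  · rintro ⟨x, hx, hz⟩
    obtain ⟨i, rfl⟩ := List.mem_iff_get.mp hx
    exact ⟨i, hz⟩
  · rintro ⟨i, hz⟩
    exact ⟨L.get i, List.get_mem L i, hz⟩


/-- Let `𝔠` be a countable finitely aligned left cancellative small category generated by
a subset `𝔖`.  Every character `χ ∈ Ω` which is not of the form `χ_x` for some `x ∈ 𝔠`
equals `χ_w` for some infinite path `w = s₁ s₂ ⋯` in `𝔖`. -/
theorem character_eq_chiW_of_not_principal [Countable (Mor C)]
    (hmono : ∀ {a b : C} (f : a ⟶ b), Mono f)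
    (hFA : ∀ a b : Mor C, ∃ F : Finset (Mor C), princ a ∩ princ b = ⋃ c ∈ F, princ c)
    (S : Set (Mor C))
    (hgen : ∀ a : Mor C, ∃ l : List (Mor C), (∀ x ∈ l, x ∈ S) ∧ ProdEq l a)
    (χ : Set (Mor C) → Prop) (hχ : InOmega χ)
    (hnp : ¬ ∃ x : Mor C, ∀ e : Set (Mor C), IsConstructible e → (χ e ↔ princ x ⊆ e)) :
    ∃ w : ℕ → Mor C, (∀ n, w n ∈ S) ∧ (∀ n, (w n).1 = (w (n + 1)).2.1) ∧
      ∀ e : Set (Mor C), IsConstructible e → (χ e ↔ chiW w e) := by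
  classical
  -- χ e implies e contains a point whose principal ideal is charged
  have hkey : ∀ e : Set (Mor C), IsConstructible e → χ e →
      ∃ x : Mor C, χ (princ x) ∧ x ∈ e := by
    intro e he hce
    obtain ⟨L, rfl⟩ := constructible_FU hmono hFA he
    obtain ⟨i, hi⟩ := hχ.2 L.length (UL L) (fun i => princ (L.get i)) he
      (fun i => princ_constructible _) (UL_eq_iUnion L) hce
    exact ⟨L.get i, hi, ⟨L.get i, List.get_mem L i, self_mem_princ _⟩⟩
  -- monotonicity of χ
  have hmonoχ : ∀ e f : Set (Mor C), IsConstructible e → IsConstructible f →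
      e ⊆ f → χ e → χ f := by
    intro e f he hf hef hce
    have h2 := hχ.1.2.2 e f he hf
    rw [Set.inter_eq_left.mpr hef] at h2
    exact (h2.mp hce).2
  -- directedness
  have hdir : ∀ x : Mor C, χ (princ x) → ∀ y : Mor C, χ (princ y) →
      ∃ z : Mor C, χ (princ z) ∧ z ∈ princ x ∧ z ∈ princ y := by
    intro x hx y hy
    have hc : IsConstructible (princ x ∩ princ y) :=
      princ_inter_constructible x (princ_constructible y)
    have hχi : χ (princ x ∩ princ y) :=
      (hχ.1.2.2 _ _ (princ_constructible x) (princ_constructible y)).mpr ⟨hx, hy⟩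
    obtain ⟨z, hz, hzm⟩ := hkey _ hc hχi
    exact ⟨z, hz, hzm.1, hzm.2⟩
  -- no maximal element
  have hnomax : ∀ p : Mor C, χ (princ p) → ∃ y : Mor C, χ (princ y) ∧ p ∉ princ y := by
    by_contra hcon
    push_neg at hcon
    obtain ⟨p, hp, hall⟩ := hcon
    refine hnp ⟨p, fun e he => ?_⟩
    constructor
    · intro hce
      obtain ⟨x, hx, hxe⟩ := hkey e he hce
      exact (princ_mono (hall x hx)).trans (constructible_ideal hmono hFA he hxe)
    · intro hsub
      exact hmonoχ _ _ (princ_constructible p) he hsub hp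
  -- a starting point
  obtain ⟨e0, he0, hce0⟩ := hχ.1.1
  obtain ⟨x0, hx0, -⟩ := hkey e0 he0 hce0
  haveI : Nonempty (Mor C) := ⟨x0⟩
  obtain ⟨a, ha⟩ := exists_surjective_nat (Mor C)
  -- the inductive step
  have hstep : ∀ p : Mor C, χ (princ p) → ∀ q : Mor C,
      ∃ r : Mor C, χ (princ r) ∧ r ∈ princ p ∧ (χ (princ q) → r ∈ princ q) ∧
        p ∉ princ r := by
    intro p hp q
    by_cases hq : χ (princ q)
    · obtain ⟨z, hz, hzp, hzq⟩ := hdir p hp q hq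
      obtain ⟨y, hy, hzy⟩ := hnomax z hz
      obtain ⟨r, hr, hrz, hry⟩ := hdir z hz y hy
      exact ⟨r, hr, princ_trans hrz hzp, fun _ => princ_trans hrz hzq,
        fun hpr => hzy (princ_mono hry (princ_mono hpr hzp))⟩
    · obtain ⟨y, hy, hpy⟩ := hnomax p hp
      obtain ⟨r, hr, hrp, hry⟩ := hdir p hp y hy
      exact ⟨r, hr, hrp, fun h => absurd h hq, fun hpr => hpy (princ_mono hry hpr)⟩
  have hstep' : ∀ (p : {m : Mor C // χ (princ m)}) (q : Mor C),
      ∃ r : {m : Mor C // χ (princ m)}, r.1 ∈ princ p.1 ∧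
        (χ (princ q) → r.1 ∈ princ q) ∧ p.1 ∉ princ r.1 := by
    intro p q
    obtain ⟨r, h1, h2, h3, h4⟩ := hstep p.1 p.2 q
    exact ⟨⟨r, h1⟩, h2, h3, h4⟩
  choose st hst1 hst2 hst3 using hstep'
  -- the cofinal chain
  let X : ℕ → {m : Mor C // χ (princ m)} :=
    fun n => Nat.rec ⟨x0, hx0⟩ (fun n p => st p (a n)) n
  have hX : ∀ n, X (n + 1) = st (X n) (a n) := fun n => rfl
  -- the gaps, decomposed into S-words
  have hword : ∀ n : ℕ, ∃ (l : List (Mor C)) (y : Mor C) (h : y.2.1 = (X n).1.1),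
      (X (n + 1)).1 = mcomp (X n).1 y h ∧ (∀ s ∈ l, s ∈ S) ∧ ProdEq l y ∧ l ≠ [] := by
    intro n
    obtain ⟨c, g, hg⟩ : (X (n + 1)).1 ∈ princ (X n).1 := by rw [hX]; exact hst1 _ _
    obtain ⟨l, hlS, hl⟩ := hgen ⟨c, (X n).1.1, g⟩
    refine ⟨l, ⟨c, (X n).1.1, g⟩, rfl, ?_, hlS, hl, ?_⟩
    · rw [hg]; simp [mcomp]
    · intro hnil
      subst hnil
      obtain ⟨v, hv⟩ := prodEq_nil_inv hl
      obtain ⟨h1, h2, h3⟩ := mor_mk_inj hv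
      have hXn : (X (n + 1)).1 = (X n).1 := by
        rw [hg, h3]
        subst h2
        subst h1
        simp
      have h3' : (X n).1 ∉ princ (X (n + 1)).1 := by rw [hX]; exact hst3 _ _
      exact h3' (hXn ▸ self_mem_princ (X n).1)
  choose l y hcomp hmc hlS hlPE hlne using hword
  obtain ⟨l0, hl0S, hl0⟩ := hgen (X 0).1
  -- the sequence of blocks and its partial concatenations
  let Ls : ℕ → List (Mor C) := fun n => Nat.rec l0 (fun n _ => l n) n
  have hLs0 : Ls 0 = l0 := rfl
  have hLsS : ∀ n, Ls (n + 1) = l n := fun n => rfl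
  let Pre : ℕ → List (Mor C) := fun n => Nat.rec [] (fun n p => p ++ Ls n) n
  have hPre : ∀ n, Pre (n + 1) = Pre n ++ Ls n := fun n => rfl
  have hPreS : ∀ n, ∀ s ∈ Pre n, s ∈ S := by
    intro n
    induction n with
    | zero => intro s hs; exact absurd hs List.not_mem_nil
    | succ n ih =>
      intro s hs
      rw [hPre] at hs
      rcases List.mem_append.mp hs with h | h
      · exact ih s h
      · cases n with
        | zero => exact hl0S s h
        | succ k => exact hlS k s h
  have hprod : ∀ n, ProdEq (Pre (n + 1)) (X n).1 := by
    intro n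
    induction n with
    | zero => exact hl0
    | succ n ih =>
      have hap := prodEq_append ih (hlPE n) (hcomp n)
      rw [← hmc n] at hap
      exact hap
  have hlen : ∀ n, n ≤ (Pre (n + 1)).length := by
    intro n
    induction n with
    | zero => exact Nat.zero_le _
    | succ n ih =>
      have h1 : 0 < (l n).length := List.length_pos_iff.mpr (hlne n)
      have h2 : (Pre (n + 1 + 1)).length = (Pre (n + 1)).length + (l n).length := by
        rw [hPre (n + 1), List.length_append, hLsS]
      omega
  have hpref : ∀ m n : ℕ, m ≤ n → Pre m <+: Pre n := by
    intro m n h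
    induction n with
    | zero =>
      rw [Nat.le_zero.mp h]
    | succ n ih =>
      rcases eq_or_lt_of_le h with h' | h'
      · rw [h']
      · exact (ih (Nat.lt_succ_iff.mp h')).trans ⟨Ls n, (hPre n).symm⟩
  -- the infinite word
  let w : ℕ → Mor C := fun k => (Pre (k + 2)).getD k x0
  have hwlt : ∀ k, k < (Pre (k + 2)).length := by
    intro k
    have h3 : k + 1 ≤ (Pre (k + 2)).length := hlen (k + 1)
    omega
  have hw : ∀ (n k : ℕ) (hk : k < (Pre n).length), w k = (Pre n)[k] := by
    intro n k hk
    have h2 := hwlt k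
    show (Pre (k + 2)).getD k x0 = _
    rw [List.getD_eq_getElem _ _ h2]
    rcases le_total n (k + 2) with h | h
    · exact (List.IsPrefix.getElem (hpref n (k + 2) h) hk).symm
    · exact List.IsPrefix.getElem (hpref (k + 2) n h) h2
  refine ⟨w, ?_, ?_, ?_⟩
  · intro n
    have := hwlt n
    rw [hw (n + 2) n this]
    exact hPreS (n + 2) _ (List.getElem_mem this)
  · intro n
    have hln : n + 2 ≤ (Pre (n + 2 + 1)).length := hlen (n + 2)
    have hch := prodEq_chain' (hprod (n + 2))
    rw [List.Chain', List.isChain_iff_getElem] at hch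
    have hthis := hch n (by omega)
    rw [hw (n + 2 + 1) n (by omega), hw (n + 2 + 1) (n + 1) (by omega)]
    exact hthis
  · intro e he
    constructor
    · intro hce
      obtain ⟨x, hx, hxe⟩ := hkey e he hce
      obtain ⟨m, rfl⟩ := ha x
      have hXm : (X (m + 1)).1 ∈ princ (a m) := by rw [hX]; exact hst2 _ _ hx
      have hXe : (X (m + 1)).1 ∈ e := constructible_ideal hmono hFA he hxe hXm
      have hlen1 : m + 1 ≤ (Pre (m + 2)).length := hlen (m + 1)
      refine ⟨(Pre (m + 2)).length - 1, (X (m + 1)).1, ?_, hXe⟩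
      have heq : (List.range ((Pre (m + 2)).length - 1 + 1)).map w = Pre (m + 2) := by
        have hn : (Pre (m + 2)).length - 1 + 1 = (Pre (m + 2)).length := by omega
        apply List.ext_getElem
        · simp [hn]
        · intro i h1 h2
          simp only [List.getElem_map, List.getElem_range]
          exact hw (m + 2) i h2
      rw [heq]
      exact hprod (m + 1)
    · rintro ⟨j, m, hPEm, hme⟩
      have hlen2 : j + 2 ≤ (Pre (j + 2 + 1)).length := hlen (j + 2)
      have htake : (List.range (j + 1)).map w = (Pre (j + 2 + 1)).take (j + 1) := by
        apply List.ext_getElem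
        · simp [List.length_take]
          omega
        · intro i h1 h2
          simp only [List.getElem_map, List.getElem_range, List.getElem_take]
          have h3 : i < (Pre (j + 2 + 1)).length := by
            simp only [List.length_map, List.length_range] at h1
            omega
          exact hw (j + 2 + 1) i h3
      have hsplit : Pre (j + 2 + 1) =
          (List.range (j + 1)).map w ++ (Pre (j + 2 + 1)).drop (j + 1) := by
        rw [htake, List.take_append_drop]
      have hne1 : (List.range (j + 1)).map w ≠ [] := by simp
      have hprod' := hprod (j + 2)
      rw [hsplit] at hprod'
      obtain ⟨p, q, hpq, hp, hq, hXeq⟩ := prodEq_append_split hne1 hprod'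
      have hpm : p = m := prodEq_unique hne1 hp hPEm
      subst hpm
      have hXp : (X (j + 2)).1 ∈ princ p := by rw [hXeq]; exact mcomp_mem_princ _ _ _
      have hχm : χ (princ p) := hmonoχ _ _ (princ_constructible _) (princ_constructible _)
        (princ_mono hXp) (X (j + 2)).2
      exact hmonoχ _ _ (princ_constructible p) he (constructible_ideal hmono hFA he hme) hχm
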